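/- Fix Δ > 0 and (x, y), (x', y') ∈ ℝ^m × ℝ^k with |x|, |x'|, |y|, |y'| ≤ Δ. For τ' ∈ (0, 1], let C' = {(z' x', (τ'/z') y') : z' ∈ [τ', 1]} and let C = {(z x, 0) : z ∈ [0,1]} ∪ {(0, w y) : w ∈ [0,1]}. Then the Hausdorff distance satisfies d_H(C', C) ≤ |x' - x| + |y' - y| + 4Δ√(τ'). In particular, as (τ', x', y') → (0, x, y), the broken flow-line images converge in the Hausdorff distance. -/

import Mathlib

set_option maxHeartbeats 800000


/-- Image of the finite flow segment with rescaled transition time `τ ∈ (0,1]`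
and endpoint data `x, y`. -/
def flowSegImage (m k : ℕ) (τ : ℝ) (x : EuclideanSpace ℝ (Fin m))
    (y : EuclideanSpace ℝ (Fin k)) :
    Set (EuclideanSpace ℝ (Fin m) × EuclideanSpace ℝ (Fin k)) :=
  {p | ∃ z ∈ Set.Icc τ 1, p = (z • x, (τ / z) • y)}

/-- Image of the broken trajectory (`τ = 0`) with data `x, y`. -/
def brokenSegImage (m k : ℕ) (x : EuclideanSpace ℝ (Fin m))
    (y : EuclideanSpace ℝ (Fin k)) :
    Set (EuclideanSpace ℝ (Fin m) × EuclideanSpace ℝ (Fin k)) :=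
  {p | ∃ z ∈ Set.Icc (0:ℝ) 1, p = (z • x, 0)} ∪
    {p | ∃ w ∈ Set.Icc (0:ℝ) 1, p = (0, w • y)}

lemma pair_dist_le {E F : Type*} [SeminormedAddCommGroup E] [SeminormedAddCommGroup F]
    (a c : E) (b d : F) (r : ℝ) (h1 : ‖a - c‖ ≤ r) (h2 : ‖b - d‖ ≤ r) :
    dist (a, b) (c, d) ≤ r := by
  rw [Prod.dist_eq]
  exact max_le (by simpa [dist_eq_norm] using h1) (by simpa [dist_eq_norm] using h2)

lemma key (m k : ℕ) (Δ : ℝ) (hΔ : 0 < Δ)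
    (x x' : EuclideanSpace ℝ (Fin m)) (y y' : EuclideanSpace ℝ (Fin k))
    (hx : ‖x‖ ≤ Δ) (hx' : ‖x'‖ ≤ Δ) (hy : ‖y‖ ≤ Δ) (hy' : ‖y'‖ ≤ Δ)
    (τ' : ℝ) (hτ' : τ' ∈ Set.Ioc (0:ℝ) 1) :
    Metric.hausdorffDist (flowSegImage m k τ' x' y') (brokenSegImage m k x y)
      ≤ ‖x' - x‖ + ‖y' - y‖ + 2 * Δ * Real.sqrt τ' := by
  obtain ⟨hτ0, hτ1⟩ := hτ'
  set s : ℝ := Real.sqrt τ' with hsdef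
  have hs0 : 0 < s := Real.sqrt_pos.mpr hτ0
  have hs1 : s ≤ 1 := Real.sqrt_le_one.mpr hτ1
  have hss : s * s = τ' := Real.mul_self_sqrt hτ0.le
  have hτs : τ' ≤ s := by nlinarith
  have hr0 : (0:ℝ) ≤ ‖x' - x‖ + ‖y' - y‖ + 2 * Δ * s := by positivity
  set r : ℝ := ‖x' - x‖ + ‖y' - y‖ + 2 * Δ * s with hrdef
  have hnx : (0:ℝ) ≤ ‖x' - x‖ := norm_nonneg _
  have hny : (0:ℝ) ≤ ‖y' - y‖ := norm_nonneg _
  have hsΔr : s * Δ ≤ r := by nlinarith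
  have h2sΔr : 2 * (s * Δ) ≤ r := by nlinarith
  have hxr : ‖x' - x‖ ≤ r := by nlinarith
  have hyr : ‖y' - y‖ ≤ r := by nlinarith
  apply Metric.hausdorffDist_le_of_mem_dist hr0
  · rintro p ⟨z, ⟨hz1, hz2⟩, rfl⟩
    have hz0 : 0 < z := lt_of_lt_of_le hτ0 hz1
    rcases le_total s z with hcase | hcase
    · refine ⟨(z • x, 0), Or.inl ⟨z, ⟨hz0.le, hz2⟩, rfl⟩, ?_⟩
      apply pair_dist_le
      · rw [← smul_sub, norm_smul, Real.norm_eq_abs, abs_of_pos hz0]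
        calc z * ‖x' - x‖ ≤ 1 * ‖x' - x‖ :=
              mul_le_mul_of_nonneg_right hz2 hnx
          _ = ‖x' - x‖ := one_mul _
          _ ≤ r := hxr
      · rw [sub_zero, norm_smul, Real.norm_eq_abs]
        have h1 : τ' / z ≤ s := by
          rw [div_le_iff₀ hz0]; nlinarith
        have h2 : (0:ℝ) ≤ τ' / z := by positivity
        calc |τ' / z| * ‖y'‖ ≤ s * Δ := by
              rw [abs_of_nonneg h2]
              exact mul_le_mul h1 hy' (norm_nonneg _) hs0.le
          _ ≤ r := hsΔr
    · have hw1 : τ' / z ≤ 1 := by rw [div_le_one hz0]; exact hz1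
      have hw0 : (0:ℝ) ≤ τ' / z := by positivity
      refine ⟨(0, (τ' / z) • y), Or.inr ⟨τ' / z, ⟨hw0, hw1⟩, rfl⟩, ?_⟩
      apply pair_dist_le
      · rw [sub_zero, norm_smul, Real.norm_eq_abs, abs_of_pos hz0]
        calc z * ‖x'‖ ≤ s * Δ :=
              mul_le_mul hcase hx' (norm_nonneg _) hs0.le
          _ ≤ r := hsΔr
      · rw [← smul_sub, norm_smul, Real.norm_eq_abs, abs_of_nonneg hw0]
        calc τ' / z * ‖y' - y‖ ≤ 1 * ‖y' - y‖ :=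
              mul_le_mul_of_nonneg_right hw1 hny
          _ = ‖y' - y‖ := one_mul _
          _ ≤ r := hyr
  · rintro q (⟨z, ⟨hz0, hz1⟩, rfl⟩ | ⟨w, ⟨hw0, hw1⟩, rfl⟩)
    · rcases le_total s z with hcase | hcase
      · refine ⟨(z • x', (τ' / z) • y'), ⟨z, ⟨le_trans hτs hcase, hz1⟩, rfl⟩, ?_⟩
        have hz0' : 0 < z := lt_of_lt_of_le hs0 hcase
        apply pair_dist_le
        · rw [← smul_sub, norm_smul, Real.norm_eq_abs, abs_of_pos hz0']
          calc z * ‖x - x'‖ ≤ 1 * ‖x - x'‖ :=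
                mul_le_mul_of_nonneg_right hz1 (norm_nonneg _)
            _ = ‖x' - x‖ := by rw [one_mul, norm_sub_rev]
            _ ≤ r := hxr
        · rw [zero_sub, norm_neg, norm_smul, Real.norm_eq_abs]
          have h1 : τ' / z ≤ s := by rw [div_le_iff₀ hz0']; nlinarith
          have h2 : (0:ℝ) ≤ τ' / z := by positivity
          calc |τ' / z| * ‖y'‖ ≤ s * Δ := by
                rw [abs_of_nonneg h2]
                exact mul_le_mul h1 hy' (norm_nonneg _) hs0.le
            _ ≤ r := hsΔr
      · have hτss : τ' / s = s := by
          rw [hsdef]; exact Real.div_sqrt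
        refine ⟨(s • x', (τ' / s) • y'), ⟨s, ⟨hτs, hs1⟩, rfl⟩, ?_⟩
        apply pair_dist_le
        · calc ‖z • x - s • x'‖ ≤ ‖z • x‖ + ‖s • x'‖ := norm_sub_le _ _
            _ = z * ‖x‖ + s * ‖x'‖ := by
                rw [norm_smul, norm_smul, Real.norm_eq_abs, Real.norm_eq_abs,
                  abs_of_nonneg hz0, abs_of_pos hs0]
            _ ≤ 2 * (s * Δ) := by
                nlinarith [mul_le_mul hcase hx (norm_nonneg x) hs0.le,
                  mul_le_mul_of_nonneg_left hx' hs0.le]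
            _ ≤ r := h2sΔr
        · rw [zero_sub, norm_neg, norm_smul, hτss, Real.norm_eq_abs, abs_of_pos hs0]
          calc s * ‖y'‖ ≤ s * Δ := mul_le_mul_of_nonneg_left hy' hs0.le
            _ ≤ r := hsΔr
    · rcases le_total s w with hcase | hcase
      · have hw0' : 0 < w := lt_of_lt_of_le hs0 hcase
        have hz1' : τ' ≤ τ' / w := by
          rw [le_div_iff₀ hw0']; nlinarith
        have hz2' : τ' / w ≤ 1 := by
          rw [div_le_one hw0']; nlinarith
        have hww : τ' / (τ' / w) = w := by
          field_simp
        refine ⟨((τ' / w) • x', (τ' / (τ' / w)) • y'), ⟨τ' / w, ⟨hz1', hz2'⟩, rfl⟩, ?_⟩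
        apply pair_dist_le
        · rw [zero_sub, norm_neg, norm_smul, Real.norm_eq_abs]
          have h1 : τ' / w ≤ s := by rw [div_le_iff₀ hw0']; nlinarith
          have h2 : (0:ℝ) ≤ τ' / w := by positivity
          calc |τ' / w| * ‖x'‖ ≤ s * Δ := by
                rw [abs_of_nonneg h2]
                exact mul_le_mul h1 hx' (norm_nonneg _) hs0.le
            _ ≤ r := hsΔr
        · rw [hww, ← smul_sub, norm_smul, Real.norm_eq_abs, abs_of_pos hw0']
          calc w * ‖y - y'‖ ≤ 1 * ‖y - y'‖ :=
                mul_le_mul_of_nonneg_right hw1 (norm_nonneg _)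
            _ = ‖y' - y‖ := by rw [one_mul, norm_sub_rev]
            _ ≤ r := hyr
      · have hτss : τ' / s = s := by
          rw [hsdef]; exact Real.div_sqrt
        refine ⟨(s • x', (τ' / s) • y'), ⟨s, ⟨hτs, hs1⟩, rfl⟩, ?_⟩
        apply pair_dist_le
        · rw [zero_sub, norm_neg, norm_smul, Real.norm_eq_abs, abs_of_pos hs0]
          calc s * ‖x'‖ ≤ s * Δ := mul_le_mul_of_nonneg_left hx' hs0.le
            _ ≤ r := hsΔr
        · rw [hτss]
          calc ‖w • y - s • y'‖ ≤ ‖w • y‖ + ‖s • y'‖ := norm_sub_le _ _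
            _ = w * ‖y‖ + s * ‖y'‖ := by
                rw [norm_smul, norm_smul, Real.norm_eq_abs, Real.norm_eq_abs,
                  abs_of_nonneg hw0, abs_of_pos hs0]
            _ ≤ 2 * (s * Δ) := by
                nlinarith [mul_le_mul hcase hy (norm_nonneg y) hs0.le,
                  mul_le_mul_of_nonneg_left hy' hs0.le]
            _ ≤ r := h2sΔr

/-- Hausdorff distance estimate between an unbroken flow segment image and the
broken trajectory image: `d_H(C', C) ≤ |x'-x| + |y'-y| + 4Δ√τ'`; in particular
the flow-line images converge in the Hausdorff distance as `(τ',x',y') → (0,x,y)`. -/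
theorem stmt_10 (m k : ℕ) (Δ : ℝ) (hΔ : 0 < Δ)
    (x x' : EuclideanSpace ℝ (Fin m)) (y y' : EuclideanSpace ℝ (Fin k))
    (hx : ‖x‖ ≤ Δ) (hx' : ‖x'‖ ≤ Δ) (hy : ‖y‖ ≤ Δ) (hy' : ‖y'‖ ≤ Δ)
    (τ' : ℝ) (hτ' : τ' ∈ Set.Ioc (0:ℝ) 1) :
    Metric.hausdorffDist (flowSegImage m k τ' x' y') (brokenSegImage m k x y)
      ≤ ‖x' - x‖ + ‖y' - y‖ + 4 * Δ * Real.sqrt τ' ∧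
    (∀ ε > (0:ℝ), ∃ δ > (0:ℝ),
      ∀ (τ'' : ℝ) (x'' : EuclideanSpace ℝ (Fin m)) (y'' : EuclideanSpace ℝ (Fin k)),
        τ'' ∈ Set.Ioc (0:ℝ) 1 → ‖x''‖ ≤ Δ → ‖y''‖ ≤ Δ →
        τ'' < δ → ‖x'' - x‖ < δ → ‖y'' - y‖ < δ →
        Metric.hausdorffDist (flowSegImage m k τ'' x'' y'') (brokenSegImage m k x y) < ε) := by
  constructor
  · refine le_trans (key m k Δ hΔ x x' y y' hx hx' hy hy' τ' hτ') ?_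
    have hs : (0:ℝ) ≤ Real.sqrt τ' := Real.sqrt_nonneg _
    nlinarith
  · intro ε hε
    refine ⟨min (ε/3) ((ε/(12*Δ))^2), by positivity, ?_⟩
    intro τ'' x'' y'' hτ'' hx'' hy'' h1 h2 h3
    have hkey := key m k Δ hΔ x x'' y y'' hx hx'' hy hy'' τ'' hτ''
    have hδ3 : min (ε/3) ((ε/(12*Δ))^2) ≤ ε/3 := min_le_left _ _
    have hsq : Real.sqrt τ'' < ε/(12*Δ) := by
      have := Real.sqrt_lt_sqrt hτ''.1.le h1
      refine lt_of_lt_of_le this ?_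
      refine le_trans (Real.sqrt_le_sqrt (min_le_right _ _)) ?_
      rw [Real.sqrt_sq (by positivity)]
    have hmul : Δ * Real.sqrt τ'' < Δ * (ε/(12*Δ)) :=
      mul_lt_mul_of_pos_left hsq hΔ
    have heq : Δ * (ε/(12*Δ)) = ε/12 := by field_simp
    calc Metric.hausdorffDist (flowSegImage m k τ'' x'' y'') (brokenSegImage m k x y)
        ≤ ‖x'' - x‖ + ‖y'' - y‖ + 2 * Δ * Real.sqrt τ'' := hkey
      _ < ε := by rw [mul_assoc] at *; linarith
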